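/- Let A be an n×n real stochastic matrix (all entries nonnegative, every row sums to 1) that is irreducible and aperiodic, i.e. primitive: there exists m ≥ 1 such that all entries of A^m are strictly positive. If X is an n×n real symmetric matrix with nonnegative entries and zero diagonal satisfying A X Aᵀ = X, then X = 0. -/
import Mathlib


open Matrix BigOperators

/-- For a primitive (irreducible aperiodic) stochastic matrix `A`, the only
symmetric matrix `X` with nonnegative entries and zero diagonal satisfying
`A X Aᵀ = X` is `X = 0`. -/
theorem level2_fixed_point_aperiodic {n : ℕ} (A : Matrix (Fin n) (Fin n) ℝ)
    (hAnn : ∀ i j, 0 ≤ A i j) (hrow : ∀ i, ∑ j, A i j = 1)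
    (hprim : ∃ m : ℕ, 1 ≤ m ∧ ∀ i j, 0 < (A ^ m) i j)
    (X : Matrix (Fin n) (Fin n) ℝ) (hsym : X.IsSymm)
    (hXnn : ∀ i j, 0 ≤ X i j) (hdiag : ∀ i, X i i = 0)
    (hfix : A * X * Aᵀ = X) :
    X = 0 := by
  obtain ⟨m, hm1, hpos⟩ := hprim
  have hiter : ∀ k : ℕ, (A ^ k) * X * (A ^ k)ᵀ = X := by
    intro k
    induction k with
    | zero => simp
    | succ k ih =>
      rw [pow_succ, Matrix.transpose_mul]
      calc (A ^ k * A) * X * (Aᵀ * (A ^ k)ᵀ)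
          = A ^ k * (A * X * Aᵀ) * (A ^ k)ᵀ := by
            simp only [Matrix.mul_assoc]
        _ = X := by rw [hfix, ih]
  ext i j
  have hd : (∑ l, ∑ k, (A ^ m) i k * X k l * (A ^ m) i l) = 0 := by
    have := congrArg (fun M => M i i) (hiter m)
    simp only [Matrix.mul_apply, Matrix.transpose_apply] at this
    rw [hdiag i] at this
    convert this using 2 with l
    rw [Finset.sum_mul]
  have hall : ∀ l ∈ Finset.univ, ∀ k ∈ Finset.univ,
      (A ^ m) i k * X k l * (A ^ m) i l = 0 := by
    have h1 : ∀ l ∈ (Finset.univ : Finset (Fin n)),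
        (∑ k, (A ^ m) i k * X k l * (A ^ m) i l) = 0 := by
      refine Finset.sum_eq_zero_iff_of_nonneg ?_ |>.mp hd
      intro l _
      exact Finset.sum_nonneg fun k _ =>
        mul_nonneg (mul_nonneg (hpos i k).le (hXnn k l)) (hpos i l).le
    intro l hl
    exact (Finset.sum_eq_zero_iff_of_nonneg fun k _ =>
      mul_nonneg (mul_nonneg (hpos i k).le (hXnn k l)) (hpos i l).le).mp (h1 l hl)
  have := hall j (Finset.mem_univ j) i (Finset.mem_univ i)
  have hXij : X i j = 0 := by
    have h2 : (A ^ m) i i * X i j * (A ^ m) i j = 0 := this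
    have := mul_eq_zero.mp h2
    rcases this with h | h
    · rcases mul_eq_zero.mp h with h' | h'
      · exact absurd h' (hpos i i).ne'
      · exact h'
    · exact absurd h (hpos i j).ne'
  simpa using hXij
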